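/- For every killing rate κ with 0 < κ < 1 and every integer N ≥ 1 with Nκ < 1, the tail of the Green's function series satisfies Σ_{n=N+1}^∞ (4+κ)^{−2n} W_{2n}^{o,o} ≤ (log((Nκ)^{−1}))/π + 1/(6πN) + 4. -/

import Mathlib

open scoped Real

/-- Graph (L¹) distance of `x ∈ ℤ²` from the origin: `|x₁| + |x₂|`. -/
def gnorm (x : ℤ × ℤ) : ℕ := x.1.natAbs + x.2.natAbs

/-- `W n x` is the number of nearest-neighbour walks of length `n` in `ℤ²`
from the origin `o = (0,0)` to `x`, i.e. the number of sequences
`(v₀, …, v_n)` with `v₀ = o`, `v_n = x` and `|v_{i+1} − v_i| = 1` for all `i`. -/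
noncomputable def W (n : ℕ) (x : ℤ × ℤ) : ℕ :=
  Set.ncard {v : Fin (n + 1) → ℤ × ℤ |
    v 0 = (0, 0) ∧ v (Fin.last n) = x ∧
    ∀ i : Fin n, gnorm (v i.succ - v i.castSucc) = 1}

/-- The Green's function `G^{o,x}` of the simple random walk on `ℤ²` with
killing rate `κ`: `G κ x = Σ_{n≥0} (4+κ)^{-n} W_n^{o,x}`. -/
noncomputable def G (κ : ℝ) (x : ℤ × ℤ) : ℝ :=
  ∑' n : ℕ, (1 / (4 + κ)) ^ n * (W n x : ℝ)

open Finset in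
lemma steps_sum {M : Type*} [AddCommGroup M] {m : ℕ} (v : Fin (m+1) → M) :
    ∑ i : Fin m, (v i.succ - v i.castSucc) = v (Fin.last m) - v 0 := by
  induction m with
  | zero => simp
  | succ m ih =>
    rw [Fin.sum_univ_castSucc]
    have h1 : ∑ i : Fin m, (v i.castSucc.succ - v i.castSucc.castSucc)
        = v (Fin.last m).castSucc - v 0 := by
      have := ih (fun j => v j.castSucc)
      simp only [Fin.succ_castSucc] at this ⊢
      exact this
    rw [h1, Fin.succ_last]
    abel


open Finset in
lemma filter_card {m : ℕ} (a : Fin m → ℤ) (ha : ∀ i, a i = 1 ∨ a i = -1)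
    (hsum : ∑ i, a i = 0) : (univ.filter (fun i => a i = 1)).card * 2 = m := by
  classical
  set A := univ.filter (fun i => a i = 1) with hA
  set B := univ.filter (fun i => ¬ a i = 1) with hB
  have h1 : ∑ i ∈ A, a i = (A.card : ℤ) := by
    rw [Finset.sum_congr rfl (fun i hi => (Finset.mem_filter.mp hi).2)]
    simp
    rfl
  have h2 : ∑ i ∈ B, a i = -(B.card : ℤ) := by
    have key : ∀ i ∈ B, a i = -1 := by
      intro i hi
      rcases ha i with h' | h'
      · exact absurd h' (Finset.mem_filter.mp hi).2
      · exact h'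
    rw [Finset.sum_congr rfl key]
    simp
  have h3 := Finset.sum_filter_add_sum_filter_not univ (fun i => a i = 1) a
  rw [← hA, ← hB, h1, h2, hsum] at h3
  have hc : A.card + B.card = m := by
    have := Finset.card_filter_add_card_filter_not (s := (univ : Finset (Fin m)))
      (p := fun i => a i = 1)
    simpa using this
  have h4 : (A.card : ℤ) = B.card := by linarith
  have h5 : A.card = B.card := by exact_mod_cast h4
  omega


open Finset in
lemma cb_bound (n : ℕ) : Real.pi * n * (Nat.centralBinom n : ℝ)^2 ≤ 16^n := by
  have hW := Real.Wallis.le_W n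
  have hE := Real.Wallis.W_eq_factorial_ratio n
  have hcbnat : Nat.centralBinom n * (Nat.factorial n * Nat.factorial n) = Nat.factorial (2*n) := by
    rw [Nat.centralBinom, ← mul_assoc]
    have := Nat.choose_mul_factorial_mul_factorial (Nat.le_mul_of_pos_left n (by norm_num) : n ≤ 2*n)
    simpa [two_mul] using this
  have hcb : (Nat.centralBinom n : ℝ) * ((Nat.factorial n : ℝ) * Nat.factorial n) = (Nat.factorial (2*n) : ℝ) := by
    exact_mod_cast congrArg Nat.cast hcbnat
  have hfpos : (0:ℝ) < Nat.factorial n := by positivity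
  have hcbpos : (0:ℝ) < Nat.centralBinom n := by exact_mod_cast Nat.centralBinom_pos n
  have hWval : Real.Wallis.W n = 16^n / ((Nat.centralBinom n : ℝ)^2 * (2*n+1)) := by
    rw [hE, show ((2:ℝ)^(4*n)) = 16^n by rw [pow_mul]; norm_num, ← hcb]
    field_simp
  rw [hWval] at hW
  have hpi := Real.pi_pos
  rw [le_div_iff₀ (by positivity)] at hW
  have key : Real.pi * n ≤ (2*(n:ℝ)+1)/(2*n+2)*(Real.pi/2)*(2*(n:ℝ)+1) := by
    rw [div_mul_eq_mul_div, div_mul_eq_mul_div, le_div_iff₀ (by positivity)]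
    nlinarith
  have := mul_le_mul_of_nonneg_right key (sq_nonneg ((Nat.centralBinom n : ℝ)))
  calc Real.pi * n * (Nat.centralBinom n : ℝ)^2 ≤ _ := this
    _ ≤ 16^n := by linarith [hW]


open Finset in
lemma W_le_cb (n : ℕ) : W (2*n) (0,0) ≤ Nat.centralBinom n ^ 2 := by
  classical
  set m := 2*n with hm
  set S := {v : Fin (m + 1) → ℤ × ℤ |
    v 0 = (0, 0) ∧ v (Fin.last m) = (0,0) ∧
    ∀ i : Fin m, gnorm (v i.succ - v i.castSucc) = 1} with hS
  set d : (Fin (m+1) → ℤ × ℤ) → Fin m → ℤ × ℤ := fun v i => v i.succ - v i.castSucc with hd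
  set F : (Fin (m+1) → ℤ × ℤ) → Finset (Fin m) × Finset (Fin m) := fun v =>
    (univ.filter (fun i => (d v i).1 + (d v i).2 = 1),
     univ.filter (fun i => (d v i).1 - (d v i).2 = 1)) with hF
  set T : Finset (Finset (Fin m) × Finset (Fin m)) :=
    (Finset.powersetCard n univ) ×ˢ (Finset.powersetCard n univ) with hT
  have hstep : ∀ v ∈ S, ∀ i : Fin m,
      ((d v i).1 + (d v i).2 = 1 ∨ (d v i).1 + (d v i).2 = -1) ∧
      ((d v i).1 - (d v i).2 = 1 ∨ (d v i).1 - (d v i).2 = -1) := by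
    intro v hv i
    have h := hv.2.2 i
    unfold gnorm at h
    simp only [hd, Prod.fst_sub, Prod.snd_sub] at h ⊢
    omega
  have hsum : ∀ v ∈ S, ∑ i : Fin m, d v i = 0 := by
    intro v hv
    simp only [hd]
    rw [steps_sum v, hv.2.1, hv.1, sub_self]
  -- image in T
  have himg : ∀ v ∈ S, F v ∈ T := by
    intro v hv
    have hsum1 : ∑ i : Fin m, ((d v i).1 + (d v i).2) = 0 := by
      rw [Finset.sum_add_distrib]
      have := congrArg Prod.fst (hsum v hv)
      have h2 := congrArg Prod.snd (hsum v hv)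
      rw [Prod.fst_sum] at this
      rw [Prod.snd_sum] at h2
      simp only [Prod.fst_zero, Prod.snd_zero] at this h2
      rw [this, h2, add_zero]
    have hsum2 : ∑ i : Fin m, ((d v i).1 - (d v i).2) = 0 := by
      rw [Finset.sum_sub_distrib]
      have := congrArg Prod.fst (hsum v hv)
      have h2 := congrArg Prod.snd (hsum v hv)
      rw [Prod.fst_sum] at this
      rw [Prod.snd_sum] at h2
      simp only [Prod.fst_zero, Prod.snd_zero] at this h2
      rw [this, h2, sub_zero]
    have c1 := filter_card (fun i => (d v i).1 + (d v i).2) (fun i => (hstep v hv i).1) hsum1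
    have c2 := filter_card (fun i => (d v i).1 - (d v i).2) (fun i => (hstep v hv i).2) hsum2
    beta_reduce at c1 c2
    rw [hT, Finset.mem_product]
    simp only [hF]
    constructor <;> rw [Finset.mem_powersetCard_univ] <;> omega
  -- injectivity
  have hinj : Set.InjOn F S := by
    intro v hv w hw hvw
    have h1 := congrArg Prod.fst hvw
    have h2 := congrArg Prod.snd hvw
    simp only [hF] at h1 h2
    have hdeq : ∀ i : Fin m, d v i = d w i := by
      intro i
      have e1 : ((d v i).1 + (d v i).2 = 1) ↔ ((d w i).1 + (d w i).2 = 1) := by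
        constructor <;> intro hx
        · have : i ∈ univ.filter (fun i => (d w i).1 + (d w i).2 = 1) := by
            rw [← h1]; simp [hx]
          exact (Finset.mem_filter.mp this).2
        · have : i ∈ univ.filter (fun i => (d v i).1 + (d v i).2 = 1) := by
            rw [h1]; simp [hx]
          exact (Finset.mem_filter.mp this).2
      have e2 : ((d v i).1 - (d v i).2 = 1) ↔ ((d w i).1 - (d w i).2 = 1) := by
        constructor <;> intro hx
        · have : i ∈ univ.filter (fun i => (d w i).1 - (d w i).2 = 1) := by
            rw [← h2]; simp [hx]
          exact (Finset.mem_filter.mp this).2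
        · have : i ∈ univ.filter (fun i => (d v i).1 - (d v i).2 = 1) := by
            rw [h2]; simp [hx]
          exact (Finset.mem_filter.mp this).2
      have sv := hstep v hv i
      have sw := hstep w hw i
      have : (d v i).1 = (d w i).1 ∧ (d v i).2 = (d w i).2 := by omega
      exact Prod.ext this.1 this.2
    funext j
    induction j using Fin.induction with
    | zero => rw [hv.1, hw.1]
    | succ i ih =>
      have hv' : v i.succ = v i.castSucc + d v i := by simp [hd]
      have hw' : w i.succ = w i.castSucc + d w i := by simp [hd]
      rw [hv', hw', ih, hdeq i]
  -- conclude
  have hsub : F '' S ⊆ ↑T := by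
    rintro _ ⟨v, hv, rfl⟩
    exact himg v hv
  have h1 : W m (0,0) = S.ncard := rfl
  have h2 : S.ncard = (F '' S).ncard := (Set.ncard_image_of_injOn hinj).symm
  have h3 : (F '' S).ncard ≤ ((T : Set (Finset (Fin m) × Finset (Fin m)))).ncard :=
    Set.ncard_le_ncard hsub (T.finite_toSet)
  have h4 : ((T : Set (Finset (Fin m) × Finset (Fin m)))).ncard = T.card := Set.ncard_coe_finset T
  have h5 : T.card = Nat.centralBinom n ^ 2 := by
    rw [hT, Finset.card_product, Finset.card_powersetCard]
    simp [Nat.centralBinom, sq, hm]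
  omega


open Finset in
lemma sum_inv_le_log (x : ℝ) (hx : 1 ≤ x) (k : ℕ) :
    ∑ i ∈ range k, 1/(x+1+i) ≤ Real.log (x+k) - Real.log x := by
  induction k with
  | zero => simp
  | succ k ih =>
    rw [Finset.sum_range_succ]
    have hpos : (0:ℝ) < x + k := by positivity
    have hpos1 : (0:ℝ) < x + k + 1 := by positivity
    have hlog : Real.log (x+k) - Real.log (x+k+1) ≤ -(1/(x+k+1)) := by
      have h := Real.log_le_sub_one_of_pos (show (0:ℝ) < (x+k)/(x+k+1) by positivity)
      rw [Real.log_div hpos.ne' hpos1.ne'] at h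
      have : (x+k)/(x+k+1) - 1 = -(1/(x+k+1)) := by field_simp; ring
      linarith [this ▸ h]
    push_cast
    have : 1/(x+1+(k:ℝ)) = 1/(x+k+1) := by ring_nf
    rw [this, show x + ((k:ℝ) + 1) = x + k + 1 by ring]
    linarith


/-- Lemma 3.4, eq. (3.10): tail bound for the Green's function series when `Nκ < 1`. -/
theorem stmt6 (κ : ℝ) (hκ : 0 < κ) (hκ' : κ < 1) (N : ℕ) (hN : 1 ≤ N)
    (hNκ : (N : ℝ) * κ < 1) :
    (∑' n : ℕ, (1 / (4 + κ)) ^ (2 * (N + 1 + n)) * (W (2 * (N + 1 + n)) (0, 0) : ℝ))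
      ≤ Real.log ((N * κ)⁻¹) / π + 1 / (6 * π * N) + 4 := by
  have h4κ : (0:ℝ) < 4 + κ := by linarith
  have hπ := Real.pi_gt_three
  have hπ0 : (0:ℝ) < π := by linarith
  set q : ℝ := (4/(4+κ))^2 with hqdef
  have hq0 : 0 < q := by positivity
  have hq1 : q < 1 := by
    have : 4/(4+κ) < 1 := by rw [div_lt_one h4κ]; linarith
    nlinarith [div_pos (by norm_num : (0:ℝ) < 4) h4κ]
  have hqpow_le_one : ∀ k : ℕ, q^k ≤ 1 := fun k => pow_le_one₀ hq0.le hq1.le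
  have hrq : ∀ k : ℕ, (1/(4+κ))^(2*k) * 16^k = q^k := by
    intro k
    rw [pow_mul, ← mul_pow]
    congr 1
    rw [hqdef]
    field_simp
    ring
  -- termwise bound
  have key : ∀ k : ℕ, 1 ≤ k →
      (1/(4+κ))^(2*k) * (W (2*k) (0,0) : ℝ) ≤ q^k / (π*k) := by
    intro k hk
    have hk0 : (0:ℝ) < k := by exact_mod_cast hk
    have hW : (W (2*k) (0,0) : ℝ) ≤ 16^k / (π*k) := by
      rw [le_div_iff₀ (by positivity)]
      calc (W (2*k) (0,0) : ℝ) * (π*k) ≤ ((Nat.centralBinom k : ℝ)^2) * (π*k) := by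
            have : (W (2*k) (0,0) : ℝ) ≤ (Nat.centralBinom k : ℝ)^2 := by
              exact_mod_cast W_le_cb k
            exact mul_le_mul_of_nonneg_right this (by positivity)
        _ = π * k * (Nat.centralBinom k : ℝ)^2 := by ring
        _ ≤ 16^k := cb_bound k
    calc (1/(4+κ))^(2*k) * (W (2*k) (0,0) : ℝ)
        ≤ (1/(4+κ))^(2*k) * (16^k / (π*k)) := by
          exact mul_le_mul_of_nonneg_left hW (by positivity)
      _ = q^k / (π*k) := by rw [← hrq k]; ring
  set g : ℕ → ℝ := fun j => q^(N+1+j) / (π*(N+1+j)) with hgdef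
  set f : ℕ → ℝ := fun j => (1/(4+κ))^(2*(N+1+j)) * (W (2*(N+1+j)) (0,0) : ℝ) with hfdef
  have hfg : ∀ j, f j ≤ g j := by
    intro j
    have := key (N+1+j) (by omega)
    simpa [hfdef, hgdef] using this
  have hgle : ∀ j, g j ≤ q^j := by
    intro j
    have hden : (1:ℝ) ≤ π*(N+1+j) := by
      have : (1:ℝ) ≤ (N:ℝ)+1+j := by
        have : (0:ℝ) ≤ (N:ℝ) := Nat.cast_nonneg N
        have : (0:ℝ) ≤ (j:ℝ) := Nat.cast_nonneg j
        linarith [Nat.cast_nonneg (α := ℝ) N]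
      nlinarith
    calc g j ≤ q^(N+1+j) := div_le_self (by positivity) hden
      _ = q^(N+1) * q^j := by rw [← pow_add]
      _ ≤ 1 * q^j := mul_le_mul_of_nonneg_right (hqpow_le_one _) (by positivity)
      _ = q^j := one_mul _
  have hgsum : Summable g :=
    Summable.of_nonneg_of_le (fun j => by positivity) hgle
      (summable_geometric_of_lt_one hq0.le hq1)
  have hfsum : Summable f :=
    Summable.of_nonneg_of_le (fun j => by positivity) hfg hgsum
  have step1 : (∑' n : ℕ, (1 / (4 + κ)) ^ (2 * (N + 1 + n)) * (W (2 * (N + 1 + n)) (0, 0) : ℝ))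
      ≤ ∑' j, g j := Summable.tsum_le_tsum hfg hfsum hgsum
  -- split the g-sum
  set K : ℕ := ⌈1/κ⌉₊ with hKdef
  have hK1 : 1 ≤ K := Nat.one_le_iff_ne_zero.mpr (by
    simp only [hKdef, ne_eq, Nat.ceil_eq_zero, not_le]
    positivity)
  set M : ℕ := N + K with hMdef
  have hκK : 1 ≤ κ * K := by
    have h1 : (1:ℝ)/κ ≤ K := Nat.le_ceil _
    calc (1:ℝ) = κ * (1/κ) := by field_simp
      _ ≤ κ * K := by gcongr
  have hsplit := Summable.sum_add_tsum_nat_add K hgsum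
  have hA : ∑ i ∈ Finset.range K, g i ≤ (Real.log M - Real.log N) / π := by
    have h1 : ∀ i ∈ Finset.range K, g i ≤ (1/π) * (1/((N:ℝ)+1+i)) := by
      intro i _
      have e : (1/π) * (1/((N:ℝ)+1+i)) = 1/(π*((N:ℝ)+1+i)) := by
        rw [div_mul_div_comm, one_mul]
      rw [e]
      simp only [hgdef]
      gcongr
      exact hqpow_le_one _
    calc ∑ i ∈ Finset.range K, g i ≤ ∑ i ∈ Finset.range K, (1/π) * (1/((N:ℝ)+1+i)) :=
          Finset.sum_le_sum h1
      _ = (1/π) * ∑ i ∈ Finset.range K, 1/((N:ℝ)+1+i) := by rw [Finset.mul_sum]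
      _ ≤ (1/π) * (Real.log ((N:ℝ)+K) - Real.log N) := by
          gcongr
          exact sum_inv_le_log (N:ℝ) (by exact_mod_cast hN) K
      _ = (Real.log M - Real.log N) / π := by
          rw [hMdef]
          push_cast
          ring
  have hB : ∑' i, g (i + K) ≤ 25/(8*π) := by
    have hMpos : (0:ℝ) < M := by
      have : (0:ℕ) < M := by omega
      exact_mod_cast this
    have hterm : ∀ i : ℕ, g (i + K) ≤ q^i * (1/(π*M)) := by
      intro i
      rw [hgdef]
      simp only
      have e1 : N + 1 + (i + K) = (M + 1) + i := by omega
      rw [e1]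
      have e2 : q^((M+1)+i) = q^(M+1) * q^i := by rw [pow_add]
      rw [e2]
      calc q^(M+1) * q^i / (π*((N:ℝ)+1+(i+K:ℕ))) ≤ 1 * q^i / (π*(M:ℝ)) := by
            gcongr
            · exact hqpow_le_one _
            · push_cast [hMdef]; linarith [Nat.cast_nonneg (α := ℝ) i]
        _ = q^i * (1/(π*(M:ℝ))) := by ring
    have hsum2 : Summable (fun i : ℕ => q^i * (1/(π*(M:ℝ)))) :=
      (summable_geometric_of_lt_one hq0.le hq1).mul_right _
    have hsum1 : Summable (fun i : ℕ => g (i + K)) :=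
      (summable_nat_add_iff K).mpr hgsum
    calc ∑' i, g (i + K) ≤ ∑' i : ℕ, q^i * (1/(π*(M:ℝ))) :=
          Summable.tsum_le_tsum hterm hsum1 hsum2
      _ = (1-q)⁻¹ * (1/(π*(M:ℝ))) := by
          rw [tsum_mul_right, tsum_geometric_of_lt_one hq0.le hq1]
      _ ≤ 25/(8*π) := by
          have hinv : (1-q)⁻¹ ≤ 25/(8*κ) := by
            have h1q : 8*κ/25 ≤ 1 - q := by
              have hq' : 1 - q = (κ^2+8*κ)/((4+κ)^2) := by
                rw [hqdef]; field_simp; ring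
              rw [hq', div_le_div_iff₀ (by norm_num) (by positivity)]
              nlinarith
            calc (1-q)⁻¹ ≤ (8*κ/25)⁻¹ := by
                  apply inv_anti₀ (by positivity) h1q
              _ = 25/(8*κ) := by rw [inv_div]
          calc (1-q)⁻¹ * (1/(π*(M:ℝ))) ≤ (25/(8*κ)) * (1/(π*(M:ℝ))) := by
                apply mul_le_mul_of_nonneg_right hinv (by positivity)
            _ = 25/(8*π) * (1/(κ*M)) := by ring
            _ ≤ 25/(8*π) * 1 := by
                apply mul_le_mul_of_nonneg_left _ (by positivity)
                rw [div_le_one]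
                · calc (1:ℝ) ≤ κ * K := hκK
                    _ ≤ κ * M := by
                      push_cast [hMdef]
                      nlinarith [Nat.cast_nonneg (α := ℝ) N]
                · calc (0:ℝ) < 1 := one_pos
                    _ ≤ κ * M := le_trans hκK (by
                      push_cast [hMdef]
                      nlinarith [Nat.cast_nonneg (α := ℝ) N])
            _ = 25/(8*π) := mul_one _
  have hMpos : (0:ℝ) < M := by
    have : (0:ℕ) < M := by omega
    exact_mod_cast this
  have hKlt : (K:ℝ) < 1/κ + 1 := Nat.ceil_lt_add_one (by positivity)
  have hκ1 : κ * (1/κ) = 1 := by field_simp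
  have hκM : κ*(M:ℝ) ≤ 3 := by
    have h2 : κ*(K:ℝ) < 1 + κ := by
      have h3 := mul_lt_mul_of_pos_left hKlt hκ
      rw [mul_add, hκ1, mul_one] at h3
      linarith
    have h4 : κ*(N:ℝ) < 1 := by rw [mul_comm]; exact hNκ
    have h5 : ((M:ℝ)) = (N:ℝ) + (K:ℝ) := by rw [hMdef]; push_cast; ring
    rw [h5, mul_add]
    linarith
  have hM3 : (M:ℝ) ≤ 3/κ := by rw [le_div_iff₀ hκ]; linarith
  have hlogM : Real.log M ≤ Real.log 3 - Real.log κ := by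
    calc Real.log M ≤ Real.log (3/κ) := Real.log_le_log hMpos hM3
      _ = Real.log 3 - Real.log κ := Real.log_div (by norm_num) hκ.ne'
  have hlogNκ : Real.log (((N:ℝ)*κ)⁻¹) = -(Real.log N + Real.log κ) := by
    rw [Real.log_inv, Real.log_mul (Nat.cast_ne_zero.mpr (by omega)) hκ.ne']
  have hlog3 : Real.log 3 ≤ 2 := by
    rw [Real.log_le_iff_le_exp (by norm_num)]
    linarith [Real.add_one_le_exp 2]
  have b1 : Real.log 3/π ≤ 2/3 := div_le_div₀ (by norm_num) hlog3 (by norm_num) hπ.le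
  have b2 : 25/(8*π) ≤ 25/24 := by
    apply div_le_div₀ (by norm_num) le_rfl (by norm_num) (by linarith)
  have b3 : 0 ≤ 1/(6*π*(N:ℝ)) := by positivity
  have b4 : (Real.log M - Real.log N)/π ≤ (Real.log 3 - Real.log κ - Real.log N)/π := by
    gcongr
  calc (∑' n : ℕ, (1 / (4 + κ)) ^ (2 * (N + 1 + n)) * (W (2 * (N + 1 + n)) (0, 0) : ℝ))
      ≤ ∑' j, g j := step1
    _ = ∑ i ∈ Finset.range K, g i + ∑' i, g (i + K) := hsplit.symm
    _ ≤ (Real.log M - Real.log N)/π + 25/(8*π) := add_le_add hA hB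
    _ ≤ Real.log ((N * κ)⁻¹) / π + 1 / (6 * π * N) + 4 := by
        rw [hlogNκ]
        have e1 : (Real.log 3 - Real.log κ - Real.log N)/π
            = Real.log 3/π + (-(Real.log N + Real.log κ))/π := by ring
        linarith
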